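/- Let π be dominant with Rothe diagram equal to the Young diagram of λ, and let w be any permutation with w ≤_L π. For indices i, k ≥ 1, the following are equivalent: (1) i ≤ λ'_{π(w⁻¹(k))}, where λ' is the conjugate of λ; (2) π(w⁻¹(k)) ≤ λ_i; (3) (i, π(w⁻¹(k))) ∈ D(π); (4) (i, w⁻¹(k)) ∈ Inv(π). -/

import Mathlib

open Equiv MvPolynomial

/-- A permutation of ℕ has finite support. -/
def FinSupp (w : Equiv.Perm ℕ) : Prop := {i | w i ≠ i}.Finite

/-- Inversion set Inv(w) = {(i,j) : i < j, w i > w j}. -/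
def invSet (w : Equiv.Perm ℕ) : Set (ℕ × ℕ) := {p | p.1 < p.2 ∧ w p.2 < w p.1}

/-- Co-inversion set coInv(w) = {(i,j) : i < j, w i < w j}. -/
def coinvSet (w : Equiv.Perm ℕ) : Set (ℕ × ℕ) := {p | p.1 < p.2 ∧ w p.1 < w p.2}

/-- Coxeter length ℓ(w) = |Inv(w)|. -/
noncomputable def len (w : Equiv.Perm ℕ) : ℕ := (invSet w).ncard

/-- Cover relation of left weak order: u = s_k * w with ℓ(u) = ℓ(w) + 1. -/
def WeakCover (w u : Equiv.Perm ℕ) : Prop :=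
  ∃ k, u = Equiv.swap k (k + 1) * w ∧ len u = len w + 1

/-- Left weak order: reflexive-transitive closure of weak covers. -/
def leL (w u : Equiv.Perm ℕ) : Prop := Relation.ReflTransGen WeakCover w u

/-- π avoids the pattern 132 (π is dominant). -/
def Avoids132 (π : Equiv.Perm ℕ) : Prop :=
  ¬ ∃ a b c : ℕ, a < b ∧ b < c ∧ π a < π c ∧ π c < π b

/-- Rothe diagram D(π) (0-indexed conventions). -/
def Rothe (π : Equiv.Perm ℕ) : Set (ℕ × ℕ) := {p | p.1 < π⁻¹ p.2 ∧ p.2 < π p.1}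

/-- Young diagram of a partition (0-indexed): row i has l i cells. -/
def yd (l : ℕ → ℕ) : Set (ℕ × ℕ) := {p | p.2 < l p.1}

/-- Conjugate partition (0-indexed): column j has |{i : l i > j}| cells. -/
noncomputable def conjPart (l : ℕ → ℕ) (j : ℕ) : ℕ := {i | j < l i}.ncard

/-- A pipe dream: a finite set of crossing tiles together with the (uniquely
determined) labels of the pipes on the four edges of each tile.  At a cross
tile the pipes pass straight through; at a bump tile the pipe from the north
exits west and the pipe from the east exits south.  Pipe j enters the quadrant
at the north edge of column j. -/
structure PipeDream where
  cross : Finset (ℕ × ℕ)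
  north : ℕ × ℕ → ℕ
  east : ℕ × ℕ → ℕ
  south : ℕ × ℕ → ℕ
  west : ℕ × ℕ → ℕ
  north_top : ∀ j, north (0, j) = j
  north_succ : ∀ i j, north (i + 1, j) = south (i, j)
  east_eq : ∀ i j, east (i, j) = west (i, j + 1)
  south_cross : ∀ p ∈ cross, south p = north p
  west_cross : ∀ p ∈ cross, west p = east p
  south_bump : ∀ p, p ∉ cross → south p = east p
  west_bump : ∀ p, p ∉ cross → west p = north p

namespace PipeDream

/-- Pipes a and b cross at position p. -/
def CrossAt (P : PipeDream) (a b : ℕ) (p : ℕ × ℕ) : Prop :=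
  p ∈ P.cross ∧ ({P.north p, P.east p} : Set ℕ) = {a, b}

/-- A pipe dream is reduced if no two pipes cross more than once. -/
def Reduced (P : PipeDream) : Prop :=
  ∀ a b p q, P.CrossAt a b p → P.CrossAt a b q → p = q

/-- P is a pipe dream for the permutation w: pipe a exits on the west edge at
row w⁻¹(a), i.e. the one-line notation read along the west edge is w. -/
def IsFor (P : PipeDream) (w : Equiv.Perm ℕ) : Prop := ∀ i, P.west (i, 0) = w i

/-- Pipe k passes through the tile p. -/
def OnPipe (P : PipeDream) (k : ℕ) (p : ℕ × ℕ) : Prop := P.north p = k ∨ P.east p = k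

/-- p lies weakly northwest of pipe k. -/
def NWOfPipe (P : PipeDream) (k : ℕ) (p : ℕ × ℕ) : Prop :=
  ∃ q, P.OnPipe k q ∧ p.1 ≤ q.1 ∧ p.2 ≤ q.2

end PipeDream

/-- The set of reduced pipe dreams for w. -/
def PD (w : Equiv.Perm ℕ) : Set PipeDream := {P | P.Reduced ∧ P.IsFor w}

/-- The set of π-dominated positions of a pipe dream P ∈ PD(w), where π is the
dominant permutation with Rothe diagram the Young diagram of l:
row(p) < λ'(π(w⁻¹(s_p))) (0-indexed), s_p being the pipe exiting p south. -/
noncomputable def dominated (π : Equiv.Perm ℕ) (l : ℕ → ℕ) (w : Equiv.Perm ℕ)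
    (P : PipeDream) : Set (ℕ × ℕ) :=
  {p | p.1 < conjPart l (π (w⁻¹ (P.south p)))}

/-- The Schubert polynomial as the pipe dream generating function. -/
noncomputable def Schub (w : Equiv.Perm ℕ) : MvPolynomial ℕ ℤ :=
  ∑ᶠ P ∈ PD w, ∏ p ∈ P.cross, X p.1

/-- The polynomial ring ℤ[x;y]: x-variables are `Sum.inl i`, y-variables `Sum.inr i`. -/
abbrev PolyXY := MvPolynomial (ℕ ⊕ ℕ) ℤ

/-- The field of rational functions in the x- and y-variables. -/
noncomputable abbrev RatXY := FractionRing PolyXY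

noncomputable def Xv (i : ℕ) : RatXY := algebraMap PolyXY RatXY (X (Sum.inl i))
noncomputable def Yv (i : ℕ) : RatXY := algebraMap PolyXY RatXY (X (Sum.inr i))

/-- The π-padded Schubert polynomial 𝔖_w^π(x;y) = y^λ · 𝔖_w(x₁/y₁, x₂/y₂, …),
viewed in the field of rational functions. -/
noncomputable def padded (l : ℕ → ℕ) (w : Equiv.Perm ℕ) : RatXY :=
  (∏ᶠ i, Yv i ^ l i) * (aeval (fun i => Xv i / Yv i) (Schub w))

/-- Δ = Σ_i x_i ∂/∂y_i. -/
noncomputable def deltaOp (f : PolyXY) : PolyXY :=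
  ∑ᶠ i : ℕ, X (Sum.inl i) * pderiv (Sum.inr i) f

/-- ∇ = Σ_i y_i ∂/∂x_i. -/
noncomputable def nablaOp (f : PolyXY) : PolyXY :=
  ∑ᶠ i : ℕ, X (Sum.inr i) * pderiv (Sum.inl i) f

/-- for dominant π with diagram the Young diagram of λ and any
w ≤_L π, the four conditions (0-indexed) are equivalent:
i < λ'(π(w⁻¹ k)) ↔ π(w⁻¹ k) < λ_i ↔ (i, π(w⁻¹ k)) ∈ D(π) ↔ (i, w⁻¹ k) ∈ Inv(π). -/
theorem stmt6 (π w : Equiv.Perm ℕ) (l : ℕ → ℕ) (hπ : FinSupp π)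
    (hdom : Avoids132 π) (hl : Antitone l) (hD : Rothe π = yd l)
    (hw : leL w π) (i k : ℕ) :
    (i < conjPart l (π (w⁻¹ k)) ↔ π (w⁻¹ k) < l i)
      ∧ (π (w⁻¹ k) < l i ↔ (i, π (w⁻¹ k)) ∈ Rothe π)
      ∧ ((i, π (w⁻¹ k)) ∈ Rothe π ↔ (i, w⁻¹ k) ∈ invSet π) := by
  set j := π (w⁻¹ k) with hj
  have h2 : j < l i ↔ (i, j) ∈ Rothe π := by
    rw [hD]; exact Iff.rfl
  have h3 : (i, j) ∈ Rothe π ↔ (i, w⁻¹ k) ∈ invSet π := by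
    simp only [Rothe, invSet, Set.mem_setOf_eq, hj, Perm.inv_def, Equiv.symm_apply_apply]
  refine ⟨?_, h2, h3⟩
  -- part 1
  have hS : {i | j < l i} ⊆ Set.Iio (π⁻¹ j) := by
    intro x hx
    have : (x, j) ∈ Rothe π := by rw [hD]; exact hx
    exact this.1
  have hfin : {i' | j < l i'}.Finite := (Set.finite_Iio _).subset hS
  have hlow : ∀ a b : ℕ, a ≤ b → b ∈ {i' | j < l i'} → a ∈ {i' | j < l i'} := by
    intro a b hab hb
    exact lt_of_lt_of_le hb (hl hab)
  -- the finite lower set equals Iio of its ncard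
  have key : ∀ x : ℕ, x ∈ {i' | j < l i'} ↔ x < conjPart l j := by
    have hco : conjPart l j = hfin.toFinset.card := by
      exact Set.ncard_eq_toFinset_card _ hfin
    have hFeq : hfin.toFinset = Finset.range hfin.toFinset.card := by
      refine Finset.eq_of_subset_of_card_le ?_ (by simp)
      intro x hx
      have hx' : x ∈ {i' | j < l i'} := by simpa using hx
      have hsub : Finset.Iic x ⊆ hfin.toFinset := by
        intro a ha
        simp only [Finset.mem_Iic] at ha
        simpa using hlow a x ha hx'
      have := Finset.card_le_card hsub
      simp only [Nat.card_Iic] at this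
      simpa [Finset.mem_range] using this
    intro x
    rw [hco]
    constructor
    · intro hx
      have : x ∈ hfin.toFinset := by simpa using hx
      rw [hFeq] at this
      simpa using this
    · intro hx
      have : x ∈ Finset.range hfin.toFinset.card := Finset.mem_range.mpr hx
      rw [← hFeq] at this
      simpa using this
  exact (key i).symm
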